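/- For every ℓ ≥ 1 and j = 1,…,N, the monomials ν_j^ℓ satisfy ν_j^{ℓ+1} = ν_{j+1}^ℓ, where the subscript of ν is reduced modulo N (so ν_N^{ℓ+1} = ν_1^ℓ). Consequently every ν_j^ℓ is periodic in ℓ with period N: ν_j^{ℓ+N} = ν_j^ℓ. -/

import Mathlib

/-- The monomials `ν_j^ℓ` (as exponent vectors): `ν_1^ℓ = y_{N+1}^ℓ + y_1^ℓ` and
`ν_j^ℓ = y_j^ℓ` for `j ≠ 1`. -/
def nuOf (N : ℕ) (y : ℕ → ℕ → Fin (N + 1) → ℤ) (ℓ j : ℕ) : Fin (N + 1) → ℤ :=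
  if j = 1 then y ℓ (N + 1) + y ℓ 1 else y ℓ j

/-- the cyclic successor on `{1, …, N}` -/
def nxt (N j : ℕ) : ℕ := j % N + 1

lemma nxt_iter (N : ℕ) (hN : 1 ≤ N) (j : ℕ) (hj1 : 1 ≤ j) (hjN : j ≤ N) :
    ∀ k, (nxt N)^[k] j = (j - 1 + k) % N + 1 := by
  intro k
  induction k with
  | zero =>
    simp [Nat.mod_eq_of_lt (show j - 1 < N by omega)]
    omega
  | succ k ih =>
    rw [Function.iterate_succ_apply', ih, nxt]
    rw [Nat.mod_add_mod]
    rfl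

lemma nxt_mem (N j : ℕ) (hN : 1 ≤ N) (hj1 : 1 ≤ j) (hjN : j ≤ N) :
    1 ≤ nxt N j ∧ nxt N j ≤ N := by
  unfold nxt
  have := Nat.mod_lt j hN
  omega

theorem stmt4 (N : ℕ) (hN : 2 ≤ N) (y : ℕ → ℕ → Fin (N + 1) → ℤ)
    (hr1 : ∀ ℓ, 1 ≤ ℓ → y (ℓ + 1) 1 =
        2 • y ℓ 1 + 2 • y ℓ 2 + ∑ j ∈ Finset.Icc 3 (N + 1), y ℓ j)
    (hr2 : ∀ ℓ, 1 ≤ ℓ → ∀ j, 2 ≤ j → j ≤ N - 1 → y (ℓ + 1) j = y ℓ (j + 1))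
    (hr3 : ∀ ℓ, 1 ≤ ℓ → y (ℓ + 1) N = y ℓ 1 + y ℓ (N + 1))
    (hr4 : ∀ ℓ, 1 ≤ ℓ → y (ℓ + 1) (N + 1) =
        -(2 • y ℓ 1 + ∑ j ∈ Finset.Icc 2 (N + 1), y ℓ j)) :
    ∀ ℓ, 1 ≤ ℓ →
      (∀ j, 1 ≤ j → j ≤ N - 1 → nuOf N y (ℓ + 1) j = nuOf N y ℓ (j + 1)) ∧
      nuOf N y (ℓ + 1) N = nuOf N y ℓ 1 ∧
      (∀ j, 1 ≤ j → j ≤ N → nuOf N y (ℓ + N) j = nuOf N y ℓ j) := by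
  have hsum : ∀ ℓ, ∑ j ∈ Finset.Icc 2 (N + 1), y ℓ j
      = y ℓ 2 + ∑ j ∈ Finset.Icc 3 (N + 1), y ℓ j := by
    intro ℓ
    rw [← Finset.insert_Icc_add_one_left_eq_Icc (by omega : 2 ≤ N + 1), Finset.sum_insert (by simp)]; rfl
  -- the basic shift step
  have step : ∀ ℓ, 1 ≤ ℓ → ∀ j, 1 ≤ j → j ≤ N →
      nuOf N y (ℓ + 1) j = nuOf N y ℓ (nxt N j) := by
    intro ℓ hℓ j hj1 hjN
    rcases eq_or_ne j 1 with rfl | hj1'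
    · have hnxt : nxt N 1 = 2 := by
        unfold nxt; rw [Nat.mod_eq_of_lt (by omega)]
      rw [hnxt]
      simp only [nuOf, reduceIte, if_neg (by omega : (2:ℕ) ≠ 1)]
      rw [hr4 ℓ hℓ, hr1 ℓ hℓ, hsum ℓ]
      abel
    rcases eq_or_ne j N with hjeq | hjN'
    · rw [hjeq]
      have hnxt : nxt N N = 1 := by unfold nxt; simp
      rw [hnxt]
      simp only [nuOf, reduceIte, if_neg (by omega : N ≠ 1)]
      rw [hr3 ℓ hℓ]
      abel
    · have hnxt : nxt N j = j + 1 := by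
        unfold nxt; rw [Nat.mod_eq_of_lt (by omega)]
      rw [hnxt]
      simp only [nuOf, if_neg hj1', if_neg (by omega : j + 1 ≠ 1)]
      exact hr2 ℓ hℓ j (by omega) (by omega)
  -- iterated shift
  have iter : ∀ k ℓ, 1 ≤ ℓ → ∀ j, 1 ≤ j → j ≤ N →
      nuOf N y (ℓ + k) j = nuOf N y ℓ ((nxt N)^[k] j) := by
    intro k
    induction k with
    | zero => intro ℓ hℓ j hj1 hjN; rfl
    | succ k ih =>
      intro ℓ hℓ j hj1 hjN
      have h1 : ℓ + (k + 1) = (ℓ + k) + 1 := by omega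
      rw [h1, step (ℓ + k) (by omega) j hj1 hjN, Function.iterate_succ_apply]
      have hm := nxt_mem N j (by omega) hj1 hjN
      exact ih ℓ hℓ (nxt N j) hm.1 hm.2
  intro ℓ hℓ
  refine ⟨?_, ?_, ?_⟩
  · intro j hj1 hjN
    have h := step ℓ hℓ j hj1 (by omega)
    have hnxt : nxt N j = j + 1 := by
      unfold nxt; rw [Nat.mod_eq_of_lt (by omega)]
    rwa [hnxt] at h
  · have h := step ℓ hℓ N (by omega) le_rfl
    have hnxt : nxt N N = 1 := by unfold nxt; simp
    rwa [hnxt] at h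
  · intro j hj1 hjN
    have h := iter N ℓ hℓ j hj1 hjN
    rw [nxt_iter N (by omega) j hj1 hjN N] at h
    rw [Nat.add_mod_right, Nat.mod_eq_of_lt (by omega)] at h
    rwa [show j - 1 + 1 = j by omega] at h
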